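/- Let P be a discrete poset in which every closed interval is graded (all maximal chains of each interval have the same finite length) and such that every pair of elements has a common upper bound and a common lower bound. Then there is a subset R of the integers and a map ρ : P → R restricting to an order isomorphism onto R on every maximal chain of P. -/

import Mathlib

/-- An antichain cutset: a set intersecting each maximal chain in exactly one element. -/
def IsAntichainCutset {α : Type*} [PartialOrder α] (A : Set α) : Prop :=
  ∀ c : Set α, IsMaxChain (· ≤ ·) c → ∃! x, x ∈ c ∧ x ∈ A

/-- A poset is strongly connected if any two maximal chains are connected by a finite
sequence of maximal chains in which consecutive chains have symmetric difference of
cardinality two. -/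
def StronglyConnectedOrder (α : Type*) [PartialOrder α] : Prop :=
  ∀ c d : Set α, IsMaxChain (· ≤ ·) c → IsMaxChain (· ≤ ·) d →
    ∃ (n : ℕ) (f : ℕ → Set α), f 0 = c ∧ f n = d ∧
      (∀ i ≤ n, IsMaxChain (· ≤ ·) (f i)) ∧
      ∀ i < n, (symmDiff (f i) (f (i + 1))).ncard = 2

/-- A poset is discrete if every closed interval has a maximal chain of finite length. -/
def DiscretePoset (α : Type*) [PartialOrder α] : Prop :=
  ∀ a b : α, a ≤ b → ∃ c : Set (Set.Icc a b), IsMaxChain (· ≤ ·) c ∧ c.Finite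

section GradingAux

variable {α : Type*} [PartialOrder α]

/-- A maximal chain of the interval `[a, b]`, viewed as a subset of `α`. -/
def MCI (a b : α) (s : Set α) : Prop :=
  s ⊆ Set.Icc a b ∧ IsChain (· ≤ ·) s ∧
    ∀ t : Set α, IsChain (· ≤ ·) t → t ⊆ Set.Icc a b → s ⊆ t → s = t

lemma chain_total {s : Set α} (hs : IsChain (· ≤ ·) s) {x y : α}
    (hx : x ∈ s) (hy : y ∈ s) : x ≤ y ∨ y ≤ x := by
  rcases eq_or_ne x y with h | h
  · exact Or.inl h.le
  · exact hs hx hy h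

lemma mci_image {a b : α} (s : Set (Set.Icc a b)) (hs : IsMaxChain (· ≤ ·) s) :
    MCI a b (Subtype.val '' s) := by
  refine ⟨?_, ?_, ?_⟩
  · rintro x ⟨y, hy, rfl⟩; exact y.2
  · rintro x ⟨x', hx', rfl⟩ y ⟨y', hy', rfl⟩ hne
    have hne' : x' ≠ y' := fun h => hne (by rw [h])
    exact hs.1 hx' hy' hne'
  · intro t ht hsub hst
    have h1 : s ⊆ Subtype.val ⁻¹' t := fun x hx => hst ⟨x, hx, rfl⟩
    have h2 : IsChain (· ≤ ·) (Subtype.val ⁻¹' t : Set (Set.Icc a b)) := by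
      intro x hx y hy hne
      exact ht hx hy (fun h => hne (Subtype.coe_injective h))
    have heq := hs.2 h2 h1
    rw [heq, Subtype.image_preimage_coe, Set.inter_eq_self_of_subset_right hsub]

lemma mci_preimage {a b : α} {t : Set α} (ht : MCI a b t) :
    IsMaxChain (· ≤ ·) (Subtype.val ⁻¹' t : Set (Set.Icc a b)) := by
  obtain ⟨hsub, hchain, hmax⟩ := ht
  constructor
  · intro x hx y hy hne
    exact hchain hx hy (fun h => hne (Subtype.coe_injective h))
  · intro d hd hds
    have him : IsChain (· ≤ ·) (Subtype.val '' d) := by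
      rintro x ⟨x', hx', rfl⟩ y ⟨y', hy', rfl⟩ hne
      exact hd hx' hy' (fun h => hne (by rw [h]))
    have hsub' : Subtype.val '' d ⊆ Set.Icc a b := by rintro x ⟨y, _, rfl⟩; exact y.2
    have hts : t ⊆ Subtype.val '' d := fun x hx => ⟨⟨x, hsub hx⟩, hds hx, rfl⟩
    have heq : t = Subtype.val '' d := hmax _ him hsub' hts
    rw [heq, Set.preimage_image_eq _ Subtype.coe_injective]

lemma mci_mem_left {a b : α} (hab : a ≤ b) {t : Set α} (ht : MCI a b t) : a ∈ t := by
  obtain ⟨hsub, hchain, hmax⟩ := ht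
  have hch : IsChain (· ≤ ·) (insert a t) := by
    intro x hx y hy hne
    rcases hx with rfl | hx
    · rcases hy with rfl | hy
      · exact absurd rfl hne
      · exact Or.inl (hsub hy).1
    · rcases hy with rfl | hy
      · exact Or.inr (hsub hx).1
      · exact hchain hx hy hne
  have heq := hmax _ hch (by
    rintro x (rfl | hx)
    · exact ⟨le_refl _, hab⟩
    · exact hsub hx) (Set.subset_insert _ _)
  rw [heq]; exact Set.mem_insert _ _

lemma mci_mem_right {a b : α} (hab : a ≤ b) {t : Set α} (ht : MCI a b t) : b ∈ t := by
  obtain ⟨hsub, hchain, hmax⟩ := ht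
  have hch : IsChain (· ≤ ·) (insert b t) := by
    intro x hx y hy hne
    rcases hx with rfl | hx
    · rcases hy with rfl | hy
      · exact absurd rfl hne
      · exact Or.inr (hsub hy).2
    · rcases hy with rfl | hy
      · exact Or.inl (hsub hx).2
      · exact hchain hx hy hne
  have heq := hmax _ hch (by
    rintro x (rfl | hx)
    · exact ⟨hab, le_refl _⟩
    · exact hsub hx) (Set.subset_insert _ _)
  rw [heq]; exact Set.mem_insert _ _

lemma mci_union {a b c : α} (hab : a ≤ b) (hbc : b ≤ c)
    {t1 t2 : Set α} (h1 : MCI a b t1) (h2 : MCI b c t2) : MCI a c (t1 ∪ t2) := by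
  have hb1 : b ∈ t1 := mci_mem_right hab h1
  have hb2 : b ∈ t2 := mci_mem_left hbc h2
  obtain ⟨hs1, hc1, hm1⟩ := h1
  obtain ⟨hs2, hc2, hm2⟩ := h2
  refine ⟨?_, ?_, ?_⟩
  · rintro x (hx | hx)
    · exact ⟨(hs1 hx).1, (hs1 hx).2.trans hbc⟩
    · exact ⟨hab.trans (hs2 hx).1, (hs2 hx).2⟩
  · rintro x (hx | hx) y (hy | hy) hne
    · exact hc1 hx hy hne
    · exact Or.inl ((hs1 hx).2.trans (hs2 hy).1)
    · exact Or.inr ((hs1 hy).2.trans (hs2 hx).1)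
    · exact hc2 hx hy hne
  · intro u hu husub hsubu
    refine (Set.Subset.antisymm hsubu ?_)
    intro w hw
    rcases chain_total hu hw (hsubu (Or.inl hb1)) with hwb | hbw
    · left
      have hch : IsChain (· ≤ ·) (insert w t1) := by
        intro p hp q hq hne
        rcases hp with rfl | hp
        · rcases hq with rfl | hq
          · exact absurd rfl hne
          · exact chain_total hu hw (hsubu (Or.inl hq))
        · rcases hq with rfl | hq
          · exact (chain_total hu hw (hsubu (Or.inl hp))).symm
          · exact hc1 hp hq hne
      have heq := hm1 _ hch (by
        rintro x (rfl | hx)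
        · exact ⟨(husub hw).1, hwb⟩
        · exact hs1 hx) (Set.subset_insert _ _)
      rw [heq]; exact Set.mem_insert _ _
    · right
      have hch : IsChain (· ≤ ·) (insert w t2) := by
        intro p hp q hq hne
        rcases hp with rfl | hp
        · rcases hq with rfl | hq
          · exact absurd rfl hne
          · exact chain_total hu hw (hsubu (Or.inr hq))
        · rcases hq with rfl | hq
          · exact (chain_total hu hw (hsubu (Or.inr hp))).symm
          · exact hc2 hp hq hne
      have heq := hm2 _ hch (by
        rintro x (rfl | hx)
        · exact ⟨hbw, (husub hw).2⟩
        · exact hs2 hx) (Set.subset_insert _ _)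
      rw [heq]; exact Set.mem_insert _ _

lemma insert_chain_of_trace {c : Set α} (hchain : IsChain (· ≤ ·) c)
    {x y w : α} (hx : x ∈ c) (hy : y ∈ c) (hw : w ∈ Set.Icc x y)
    (hcomp : ∀ z ∈ c ∩ Set.Icc x y, w ≤ z ∨ z ≤ w) :
    IsChain (· ≤ ·) (insert w c) := by
  have key : ∀ z ∈ c, w ≤ z ∨ z ≤ w := by
    intro z hz
    rcases chain_total hchain hz hx with h | h
    · exact Or.inr (h.trans hw.1)
    · rcases chain_total hchain hz hy with h' | h'
      · exact hcomp z ⟨hz, h, h'⟩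
      · exact Or.inl (hw.2.trans h')
  intro p hp q hq hne
  rcases hp with rfl | hp
  · rcases hq with rfl | hq
    · exact absurd rfl hne
    · exact key q hq
  · rcases hq with rfl | hq
    · exact (key p hp).symm
    · exact hchain hp hq hne

lemma mci_trace {a b : α} {t : Set α} (ht : MCI a b t)
    {x y : α} (hx : x ∈ t) (hy : y ∈ t) (hxy : x ≤ y) :
    MCI x y (t ∩ Set.Icc x y) := by
  obtain ⟨hsub, hchain, hmax⟩ := ht
  refine ⟨Set.inter_subset_right, hchain.mono Set.inter_subset_left, ?_⟩
  intro u hu husub hsubu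
  refine Set.Subset.antisymm hsubu ?_
  intro w hw
  have hwI := husub hw
  have hch := insert_chain_of_trace hchain hx hy hwI
    (fun z hz => chain_total hu hw (hsubu hz))
  have heq := hmax _ hch (by
    rintro p (rfl | hp)
    · exact ⟨(hsub hx).1.trans hwI.1, hwI.2.trans (hsub hy).2⟩
    · exact hsub hp) (Set.subset_insert _ _)
  exact ⟨by rw [heq]; exact Set.mem_insert _ _, hwI⟩

lemma maxChain_trace {c : Set α} (hc : IsMaxChain (· ≤ ·) c)
    {x y : α} (hx : x ∈ c) (hy : y ∈ c) (hxy : x ≤ y) :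
    MCI x y (c ∩ Set.Icc x y) := by
  obtain ⟨hchain, hmax⟩ := hc
  refine ⟨Set.inter_subset_right, hchain.mono Set.inter_subset_left, ?_⟩
  intro u hu husub hsubu
  refine Set.Subset.antisymm hsubu ?_
  intro w hw
  have hwI := husub hw
  have hch := insert_chain_of_trace hchain hx hy hwI
    (fun z hz => chain_total hu hw (hsubu hz))
  have heq := hmax hch (Set.subset_insert _ _)
  exact ⟨by rw [heq]; exact Set.mem_insert _ _, hwI⟩

end GradingAux

/-- A discrete locally graded poset in which every pair of elements has a common upper
and lower bound admits an R-grading for some R ⊆ ℤ. -/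
theorem discrete_locallyGraded_has_grading {α : Type*} [PartialOrder α]
    (hd : DiscretePoset α)
    (hgr : ∀ a b : α, a ≤ b → ∃ k : ℕ, ∀ c : Set (Set.Icc a b),
      IsMaxChain (· ≤ ·) c → c.Finite ∧ c.ncard = k)
    (hub : ∀ x y : α, ∃ z, x ≤ z ∧ y ≤ z) (hlb : ∀ x y : α, ∃ z, z ≤ x ∧ z ≤ y) :
    ∃ (R : Set ℤ) (ρ : α → ℤ), (∀ x, ρ x ∈ R) ∧
      ∀ c : Set α, IsMaxChain (· ≤ ·) c →
        (∀ x ∈ c, ∀ y ∈ c, x ≤ y ↔ ρ x ≤ ρ y) ∧ ∀ r ∈ R, ∃ x ∈ c, ρ x = r := by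
  classical
  rcases isEmpty_or_nonempty α with hα | hα
  · refine ⟨∅, fun _ => 0, fun x => isEmptyElim x, ?_⟩
    intro c hc
    refine ⟨fun x hx => isEmptyElim x, ?_⟩
    intro r hr
    simp at hr
  obtain ⟨x₀⟩ := hα
  -- the grading number of each interval, as a function without a proof argument
  have hgr' : ∀ a b : α, a ≤ b → ∃ k : ℕ, ∀ t, MCI a b t → t.Finite ∧ t.ncard = k := by
    intro a b hab
    obtain ⟨k, hk⟩ := hgr a b hab
    refine ⟨k, fun t ht => ?_⟩
    have h1 := hk _ (mci_preimage ht)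
    have himg : Subtype.val '' (Subtype.val ⁻¹' t : Set (Set.Icc a b)) = t := by
      rw [Subtype.image_preimage_coe, Set.inter_eq_self_of_subset_right ht.1]
    constructor
    · rw [← himg]; exact h1.1.image _
    · rw [← himg, Set.ncard_image_of_injective _ Subtype.coe_injective]; exact h1.2
  choose K hKspec using hgr'
  set N : α → α → ℕ := fun a b => if h : a ≤ b then K a b h else 0 with hN
  have Ncard : ∀ a b : α, a ≤ b → ∀ t, MCI a b t → t.Finite ∧ t.ncard = N a b := by
    intro a b hab t ht
    simp only [hN, dif_pos hab]
    exact hKspec a b hab t ht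
  have hex : ∀ a b : α, a ≤ b → ∃ t, MCI a b t := by
    intro a b hab
    obtain ⟨s, hs, _⟩ := hd a b hab
    exact ⟨_, mci_image s hs⟩
  have Npos : ∀ a b : α, a ≤ b → 1 ≤ N a b := by
    intro a b hab
    obtain ⟨t, ht⟩ := hex a b hab
    have hc := Ncard a b hab t ht
    have h0 : 0 < t.ncard := (Set.ncard_pos hc.1).mpr ⟨a, mci_mem_left hab ht⟩
    omega
  have Ntwo : ∀ a b : α, a < b → 2 ≤ N a b := by
    intro a b hab
    obtain ⟨t, ht⟩ := hex a b hab.le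
    have hc := Ncard a b hab.le t ht
    have h1 : 1 < t.ncard := (Set.one_lt_ncard hc.1).mpr
      ⟨a, mci_mem_left hab.le ht, b, mci_mem_right hab.le ht, hab.ne⟩
    omega
  have Nadd : ∀ a b c : α, a ≤ b → b ≤ c → N a c + 1 = N a b + N b c := by
    intro a b c hab hbc
    obtain ⟨t1, h1⟩ := hex a b hab
    obtain ⟨t2, h2⟩ := hex b c hbc
    have hu : MCI a c (t1 ∪ t2) := mci_union hab hbc h1 h2
    have hint : t1 ∩ t2 = {b} := by
      apply Set.Subset.antisymm
      · rintro x ⟨hx1, hx2⟩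
        exact le_antisymm (h1.1 hx1).2 (h2.1 hx2).1
      · rintro x rfl
        exact ⟨mci_mem_right hab h1, mci_mem_left hbc h2⟩
    have hf1 := (Ncard a b hab t1 h1).1
    have hf2 := (Ncard b c hbc t2 h2).1
    have hcard := Set.ncard_union_add_ncard_inter t1 t2 hf1 hf2
    rw [hint, Set.ncard_singleton] at hcard
    have e1 := (Ncard a b hab t1 h1).2
    have e2 := (Ncard b c hbc t2 h2).2
    have e3 := (Ncard a c (hab.trans hbc) _ hu).2
    omega
  -- the rank function
  set ρ : α → ℤ := fun x => (N (hlb x₀ x).choose x : ℤ) - (N (hlb x₀ x).choose x₀ : ℤ)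
    with hρ
  have ρ_spec : ∀ (x z : α), z ≤ x₀ → z ≤ x → ρ x = (N z x : ℤ) - (N z x₀ : ℤ) := by
    intro x z h1 h2
    simp only [hρ]
    obtain ⟨hz1, hz2⟩ := (hlb x₀ x).choose_spec
    set z1 := (hlb x₀ x).choose with hz1def
    obtain ⟨w, hwz, hwz1⟩ := hlb z z1
    have e1 := Nadd w z x hwz h2
    have e2 := Nadd w z x₀ hwz h1
    have e3 := Nadd w z1 x hwz1 hz2
    have e4 := Nadd w z1 x₀ hwz1 hz1
    omega
  have ρ_add : ∀ x y : α, x ≤ y → ρ y = ρ x + (N x y : ℤ) - 1 := by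
    intro x y hxy
    obtain ⟨z, hz0, hzx⟩ := hlb x₀ x
    have h1 := ρ_spec x z hz0 hzx
    have h2 := ρ_spec y z hz0 (hzx.trans hxy)
    have e := Nadd z x y hzx hxy
    omega
  have ρ_mono : ∀ x y : α, x ≤ y → ρ x ≤ ρ y := by
    intro x y hxy
    have := ρ_add x y hxy
    have := Npos x y hxy
    omega
  have ρ_strict : ∀ x y : α, x < y → ρ x + 1 ≤ ρ y := by
    intro x y hxy
    have := ρ_add x y hxy.le
    have := Ntwo x y hxy
    omega
  -- surjectivity of ρ on maximal chains of intervals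
  have surj : ∀ n : ℕ, ∀ a b : α, a ≤ b → ∀ t : Set α, MCI a b t → N a b ≤ n →
      ∀ r : ℤ, ρ a ≤ r → r ≤ ρ b → ∃ x ∈ t, ρ x = r := by
    intro n
    induction n with
    | zero =>
      intro a b hab t _ hn
      have := Npos a b hab
      omega
    | succ n ih =>
      intro a b hab t ht hn r hra hrb
      rcases eq_or_lt_of_le hra with heq | hlt
      · exact ⟨a, mci_mem_left hab ht, heq⟩
      · have hρab : ρ a < ρ b := lt_of_lt_of_le hlt hrb
        have hne : a ≠ b := by rintro rfl; omega
        have ha : a ∈ t := mci_mem_left hab ht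
        have hbt : b ∈ t := mci_mem_right hab ht
        have hfin : t.Finite := (Ncard a b hab t ht).1
        have hne' : (t \ {a}).Nonempty := ⟨b, hbt, hne.symm⟩
        obtain ⟨a', ⟨ha't, ha'ne⟩, hmin⟩ :=
          (by
            obtain ⟨m, hm1, hm2⟩ := (hfin.diff (t := {a})).exists_minimal hne'
            exact ⟨m, hm1, fun y hy hle => le_antisymm (hm2 hy hle) hle⟩ :
            ∃ m ∈ t \ {a}, ∀ y ∈ t \ {a}, id y ≤ id m → id m = id y)
        have ha'ne' : a ≠ a' := fun h => ha'ne (by simp [h.symm])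
        have haa' : a < a' := lt_of_le_of_ne (ht.1 ha't).1 ha'ne'
        have hleast : ∀ z ∈ t, z ≠ a → a' ≤ z := by
          intro z hz hzne
          rcases chain_total ht.2.1 ha't hz with h | h
          · exact h
          · exact (hmin z ⟨hz, hzne⟩ h).le
        have htrace1 : MCI a a' (t ∩ Set.Icc a a') := mci_trace ht ha ha't haa'.le
        have hpair : t ∩ Set.Icc a a' = {a, a'} := by
          apply Set.Subset.antisymm
          · rintro z ⟨hzt, hz1, hz2⟩
            rcases eq_or_ne z a with rfl | hzne
            · exact Or.inl rfl
            · exact Or.inr (le_antisymm hz2 (hleast z hzt hzne))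
          · rintro z (rfl | rfl)
            · exact ⟨ha, le_refl _, haa'.le⟩
            · exact ⟨ha't, haa'.le, le_refl _⟩
        have hN2 : N a a' = 2 := by
          have hc := (Ncard a a' haa'.le _ htrace1).2
          rw [hpair, Set.ncard_pair (ne_of_lt haa')] at hc
          omega
        have hρa' : ρ a' = ρ a + 1 := by
          have := ρ_add a a' haa'.le
          omega
        have ha'b : a' ≤ b := (ht.1 ha't).2
        have htrace2 : MCI a' b (t ∩ Set.Icc a' b) := mci_trace ht ha't hbt ha'b
        have hNsum := Nadd a a' b haa'.le ha'b
        have hN2' := (Ncard a' b ha'b _ htrace2).2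
        obtain ⟨x, hx, hxr⟩ := ih a' b ha'b _ htrace2 (by omega) r (by omega) hrb
        exact ⟨x, hx.1, hxr⟩
  -- maximal chains reach arbitrarily high and low ranks
  have up : ∀ c : Set α, IsMaxChain (· ≤ ·) c → ∀ x₁ ∈ c, ∀ w : α,
      ∃ b ∈ c, ρ w ≤ ρ b := by
    intro c hc x₁ hx₁ w
    by_cases hmax : ∃ m ∈ c, ∀ z ∈ c, z ≤ m
    · obtain ⟨m, hm, hmtop⟩ := hmax
      obtain ⟨u, hmu, hwu⟩ := hub m w
      have hch : IsChain (· ≤ ·) (insert u c) := by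
        intro p hp q hq hne
        rcases hp with rfl | hp
        · rcases hq with rfl | hq
          · exact absurd rfl hne
          · exact Or.inr ((hmtop q hq).trans hmu)
        · rcases hq with rfl | hq
          · exact Or.inl ((hmtop p hp).trans hmu)
          · exact hc.1 hp hq hne
      have heq : c = insert u c := hc.2 hch (Set.subset_insert _ _)
      have hu : u ∈ c := by rw [heq]; exact Set.mem_insert _ _
      exact ⟨m, hm, ρ_mono w m (hwu.trans (hmtop u hu))⟩
    · push_neg at hmax
      have step : ∀ z ∈ c, ∃ z' ∈ c, ρ z + 1 ≤ ρ z' := by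
        intro z hz
        obtain ⟨z', hz', hnle⟩ := hmax z hz
        have hlt : z < z' := by
          rcases chain_total hc.1 hz hz' with h | h
          · exact lt_of_le_of_ne h (by rintro rfl; exact hnle le_rfl)
          · exact absurd h hnle
        exact ⟨z', hz', ρ_strict z z' hlt⟩
      have grow : ∀ n : ℕ, ∃ z ∈ c, ρ x₁ + n ≤ ρ z := by
        intro n
        induction n with
        | zero => exact ⟨x₁, hx₁, by simp⟩
        | succ n ihn =>
          obtain ⟨z, hz, hzr⟩ := ihn
          obtain ⟨z', hz', h⟩ := step z hz
          exact ⟨z', hz', by push_cast at hzr ⊢; omega⟩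
      obtain ⟨z, hz, hzr⟩ := grow (ρ w - ρ x₁).toNat
      exact ⟨z, hz, by omega⟩
  have down : ∀ c : Set α, IsMaxChain (· ≤ ·) c → ∀ x₁ ∈ c, ∀ w : α,
      ∃ a ∈ c, ρ a ≤ ρ w := by
    intro c hc x₁ hx₁ w
    by_cases hmin : ∃ m ∈ c, ∀ z ∈ c, m ≤ z
    · obtain ⟨m, hm, hmbot⟩ := hmin
      obtain ⟨u, hmu, hwu⟩ := hlb m w
      have hch : IsChain (· ≤ ·) (insert u c) := by
        intro p hp q hq hne
        rcases hp with rfl | hp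
        · rcases hq with rfl | hq
          · exact absurd rfl hne
          · exact Or.inl (hmu.trans (hmbot q hq))
        · rcases hq with rfl | hq
          · exact Or.inr (hmu.trans (hmbot p hp))
          · exact hc.1 hp hq hne
      have heq : c = insert u c := hc.2 hch (Set.subset_insert _ _)
      have hu : u ∈ c := by rw [heq]; exact Set.mem_insert _ _
      exact ⟨m, hm, ρ_mono m w ((hmbot u hu).trans hwu)⟩
    · push_neg at hmin
      have step : ∀ z ∈ c, ∃ z' ∈ c, ρ z' + 1 ≤ ρ z := by
        intro z hz
        obtain ⟨z', hz', hnle⟩ := hmin z hz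
        have hlt : z' < z := by
          rcases chain_total hc.1 hz' hz with h | h
          · exact lt_of_le_of_ne h (by rintro rfl; exact hnle le_rfl)
          · exact absurd h hnle
        exact ⟨z', hz', ρ_strict z' z hlt⟩
      have grow : ∀ n : ℕ, ∃ z ∈ c, ρ z ≤ ρ x₁ - n := by
        intro n
        induction n with
        | zero => exact ⟨x₁, hx₁, by simp⟩
        | succ n ihn =>
          obtain ⟨z, hz, hzr⟩ := ihn
          obtain ⟨z', hz', h⟩ := step z hz
          exact ⟨z', hz', by push_cast at hzr ⊢; omega⟩
      obtain ⟨z, hz, hzr⟩ := grow (ρ x₁ - ρ w).toNat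
      exact ⟨z, hz, by omega⟩
  -- assemble
  refine ⟨Set.range ρ, ρ, fun x => ⟨x, rfl⟩, ?_⟩
  intro c hc
  refine ⟨?_, ?_⟩
  · intro x hx y hy
    constructor
    · exact ρ_mono x y
    · intro h
      rcases chain_total hc.1 hx hy with hxy | hyx
      · exact hxy
      · rcases eq_or_lt_of_le hyx with heq | hlt
        · exact heq.ge
        · have := ρ_strict y x hlt
          omega
  · rintro r ⟨w, rfl⟩
    obtain ⟨x₁, hx₁⟩ : c.Nonempty := by
      rcases Set.eq_empty_or_nonempty c with rfl | h
      · have heq := hc.2 (Set.subsingleton_singleton (a := x₀)).isChain (Set.empty_subset _)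
        exact absurd heq.symm (Set.singleton_ne_empty x₀)
      · exact h
    obtain ⟨b, hb, hrb⟩ := up c hc x₁ hx₁ w
    obtain ⟨a, ha, hra⟩ := down c hc x₁ hx₁ w
    rcases chain_total hc.1 ha hb with hab | hba
    · have htr := maxChain_trace hc ha hb hab
      obtain ⟨x, hx, hxr⟩ := surj (N a b) a b hab _ htr le_rfl (ρ w) hra hrb
      exact ⟨x, hx.1, hxr⟩
    · have := ρ_mono b a hba
      exact ⟨a, ha, by omega⟩
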